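/- Let I ⊆ L⁰(ℕ) be a stable set and let (H_i)_{i∈I} be a stable family of stable subsets of L⁰(E), i.e. each H_i is a stable subset of L⁰(E) and H_{Σ_k 1_{A_k} i_k} = {Σ_k 1_{A_k} z_k : z_k ∈ H_{i_k}} for all countable 𝓕-measurable partitions (A_k) of Ω and sequences (i_k) in I. Then there exists a stable family (x_i)_{i∈I} of elements of L⁰(E) — i.e. x_{Σ_k 1_{A_k} i_k} = Σ_k 1_{A_k} x_{i_k} for all such partitions and sequences — with x_i ∈ H_i for every i ∈ I. -/

import Mathlib

open MeasureTheory Filter Topology Set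

namespace RandomSetPaper

variable {Ω E : Type*}

/-- Effros measurability of a set-valued mapping `S : Ω ⇉ E`. -/
def EffrosMeasurable [MeasurableSpace Ω] [TopologicalSpace E] (S : Ω → Set E) : Prop :=
  ∀ O : Set E, IsOpen O → MeasurableSet {ω | (S ω ∩ O).Nonempty}

/-- The set of (a.e. classes of) measurable selections of `S`. -/
def Selections [MeasurableSpace Ω] [MeasurableSpace E] (μ : Measure Ω)
    (S : Ω → Set E) : Set (Ω → E) :=
  {f | Measurable f ∧ ∀ᵐ ω ∂μ, f ω ∈ S ω}

/-- A countable measurable partition of `Ω`, up to `μ`-null sets. -/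
def IsPartitionAE [MeasurableSpace Ω] (μ : Measure Ω) (A : ℕ → Set Ω) : Prop :=
  (∀ k, MeasurableSet (A k)) ∧ (∀ i j, i ≠ j → μ (A i ∩ A j) = 0) ∧ μ (⋃ k, A k)ᶜ = 0

/-- `f` is (a version of) the concatenation `Σₖ 1_{Aₖ} zₖ` of the sequence `z` along the
partition `A`, i.e. `f = z k` a.e. on `A k` for every `k`. -/
def IsConcatAE [MeasurableSpace Ω] (μ : Measure Ω) (A : ℕ → Set Ω)
    (z : ℕ → Ω → E) (f : Ω → E) : Prop :=
  ∀ k, ∀ᵐ ω ∂μ, ω ∈ A k → f ω = z k ω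

/-- A stable subset of `L⁰(E)` (identified with a μ-a.e.-saturated set of measurable
functions): nonempty and closed under countable concatenations along measurable
partitions. -/
def StableFnSet [MeasurableSpace Ω] [MeasurableSpace E] (μ : Measure Ω)
    (X : Set (Ω → E)) : Prop :=
  X.Nonempty ∧ ∀ (A : ℕ → Set Ω), IsPartitionAE μ A → ∀ z : ℕ → Ω → E,
    (∀ k, z k ∈ X) → ∀ f : Ω → E, Measurable f → IsConcatAE μ A z f → f ∈ X

/-- A sequentially closed subset of `L⁰(E)`: closed under a.s. limits. -/
def SeqClosedFnSet [MeasurableSpace Ω] [MeasurableSpace E] [TopologicalSpace E]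
    (μ : Measure Ω) (X : Set (Ω → E)) : Prop :=
  ∀ x : ℕ → Ω → E, (∀ n, x n ∈ X) → ∀ f : Ω → E, Measurable f →
    (∀ᵐ ω ∂μ, Tendsto (fun n => x n ω) atTop (nhds (f ω))) → f ∈ X

end RandomSetPaper

namespace RandomSetPaper

/-- Essential supremum of an arbitrary family of measurable sets: there is a countable
subfamily whose union a.e.-covers every member of the family. -/
lemma exists_opt_cover {α ι : Type*} [MeasurableSpace α] (μ : Measure α)
    [IsFiniteMeasure μ] (B : ι → Set α) (hB : ∀ i, MeasurableSet (B i)) :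
    ∃ g : ℕ → Option ι, ∀ i, μ (B i \ ⋃ n, Option.elim (g n) ∅ B) = 0 := by
  classical
  set D : Set (Set α) := {u | ∃ g : ℕ → Option ι, u = ⋃ n, Option.elim (g n) ∅ B} with hD
  have hmeasD : ∀ u ∈ D, MeasurableSet u := by
    rintro u ⟨g, rfl⟩
    refine MeasurableSet.iUnion fun n => ?_
    cases g n with
    | none => simp
    | some i => simpa using hB i
  have hne : (μ '' D).Nonempty :=
    ⟨μ (⋃ _n : ℕ, Option.elim (none : Option ι) ∅ B), ⟨_, ⟨fun _ => none, rfl⟩, rfl⟩⟩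
  obtain ⟨u, hmono, htend, hmem⟩ := exists_seq_tendsto_sSup hne (OrderTop.bddAbove _)
  choose v hvD hveq using hmem
  choose g hg using fun n => hvD n
  set G : ℕ → Option ι := fun k => g k.unpair.1 k.unpair.2 with hG
  set U : Set α := ⋃ n, Option.elim (G n) ∅ B with hU
  have hUv : U = ⋃ n, v n := by
    rw [hU, hG]
    rw [Set.iUnion_unpair fun n m => Option.elim (g n m) ∅ B]
    exact iUnion_congr fun n => (hg n).symm
  have hUD : U ∈ D := ⟨G, rfl⟩
  have hsup : sSup (μ '' D) = μ U := by
    apply le_antisymm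
    · have h1 : Tendsto u atTop (𝓝 (⨆ n, u n)) := tendsto_atTop_iSup hmono
      have h2 : sSup (μ '' D) = ⨆ n, u n := tendsto_nhds_unique htend h1
      rw [h2]
      refine iSup_le fun n => ?_
      rw [← hveq n]
      exact measure_mono (hUv ▸ subset_iUnion v n)
    · exact le_sSup ⟨U, hUD, rfl⟩
  refine ⟨G, fun i => ?_⟩
  have hUBi : U ∪ B i ∈ D := by
    refine ⟨fun k => Nat.rec (some i) (fun m _ => G m) k, ?_⟩
    ext ω
    constructor
    · rintro (hω | hb)
      · obtain ⟨n, hn⟩ := mem_iUnion.mp hω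
        exact mem_iUnion.mpr ⟨n + 1, hn⟩
      · exact mem_iUnion.mpr ⟨0, hb⟩
    · intro hω
      obtain ⟨k, hk⟩ := mem_iUnion.mp hω
      cases k with
      | zero => exact Or.inr hk
      | succ n => exact Or.inl (mem_iUnion.mpr ⟨n, hk⟩)
  have h1 : μ (U ∪ B i) ≤ μ U := hsup ▸ le_sSup ⟨U ∪ B i, hUBi, rfl⟩
  have hUm : MeasurableSet U := hmeasD U hUD
  have h2 : μ (U ∪ B i) = μ U + μ (B i \ U) := by
    rw [← union_diff_self, measure_union disjoint_sdiff_right ((hB i).diff hUm)]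
  rw [h2] at h1
  have h3 : μ U + μ (B i \ U) ≤ μ U + 0 := by simpa using h1
  have h4 := (ENNReal.add_le_add_iff_left (measure_ne_top μ U)).mp h3
  exact le_antisymm h4 zero_le

/-- **Lemma 5.2 (measurable axiom of choice).** Given a stable set `I ⊆ L⁰(ℕ)` and a
stable family `(H i)_{i ∈ I}` of stable subsets of `L⁰(E)`, there is a stable family
`(x i)_{i ∈ I}` with `x i ∈ H i` for every `i ∈ I`. Stability of the family `H` (resp.
`x`) means that it maps any concatenation `j = Σₖ 1_{Aₖ} iₖ` of indices to the set of
concatenations `{Σₖ 1_{Aₖ} zₖ : zₖ ∈ H iₖ}` (resp. to the concatenation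
`Σₖ 1_{Aₖ} x_{iₖ}`). -/
theorem stable_choice {Ω E : Type*} [MeasurableSpace Ω]
    {μ : Measure Ω} [IsProbabilityMeasure μ]
    [MetricSpace E] [TopologicalSpace.SeparableSpace E] [CompleteSpace E]
    [MeasurableSpace E] [BorelSpace E]
    (I : Set (Ω → ℕ)) (hImeas : ∀ i ∈ I, Measurable i) (hIstable : StableFnSet μ I)
    (H : (Ω → ℕ) → Set (Ω → E))
    (hHmeas : ∀ i ∈ I, ∀ f ∈ H i, Measurable f)
    (hHstable : ∀ i ∈ I, StableFnSet μ (H i))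
    -- stability of the family (H i)_{i ∈ I}
    (hHfam : ∀ (A : ℕ → Set Ω), IsPartitionAE μ A → ∀ iseq : ℕ → Ω → ℕ,
      (∀ k, iseq k ∈ I) → ∀ j : Ω → ℕ, Measurable j → IsConcatAE μ A iseq j →
        H j = {f | Measurable f ∧
          ∃ z : ℕ → Ω → E, (∀ k, z k ∈ H (iseq k)) ∧ IsConcatAE μ A z f}) :
    ∃ x : (Ω → ℕ) → Ω → E,
      (∀ i ∈ I, x i ∈ H i) ∧
      -- (x i)_{i ∈ I} is a stable family
      ∀ (A : ℕ → Set Ω), IsPartitionAE μ A → ∀ iseq : ℕ → Ω → ℕ,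
        (∀ k, iseq k ∈ I) → ∀ j : Ω → ℕ, j ∈ I → Measurable j → IsConcatAE μ A iseq j →
          IsConcatAE μ A (fun k => x (iseq k)) (x j) := by
  classical
  obtain ⟨i₀, hi₀⟩ := hIstable.1
  obtain ⟨f₀, hf₀⟩ := (hHstable i₀ hi₀).1
  -- admissible partial "graphs" of choice functions
  set P : Set (Set ((Ω → ℕ) × (Ω → E))) :=
    {G | (∀ p ∈ G, p.1 ∈ I ∧ p.2 ∈ H p.1) ∧
      ∀ p ∈ G, ∀ q ∈ G, ∀ᵐ ω ∂μ, p.1 ω = q.1 ω → p.2 ω = q.2 ω} with hP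
  have hchain : ∀ c ⊆ P, IsChain (· ⊆ ·) c → ∃ ub ∈ P, ∀ s ∈ c, s ⊆ ub := by
    intro c hc hchain
    refine ⟨⋃₀ c, ⟨?_, ?_⟩, fun s hs => subset_sUnion_of_mem hs⟩
    · rintro p ⟨s, hs, hp⟩
      exact (hc hs).1 p hp
    · rintro p ⟨s, hs, hp⟩ q ⟨t, ht, hq⟩
      rcases hchain.total hs ht with hst | hts
      · exact (hc ht).2 p (hst hp) q hq
      · exact (hc hs).2 p hp q (hts hq)
  obtain ⟨G, hGmax⟩ := zorn_subset P hchain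
  have hG : G ∈ P := hGmax.prop
  -- every index in I has a value chosen in the maximal graph
  have hGdom : ∀ j ∈ I, ∃ f, (j, f) ∈ G := by
    by_contra hcon
    push_neg at hcon
    obtain ⟨j, hjI, hjG⟩ := hcon
    obtain ⟨h₀, hh₀⟩ := (hHstable j hjI).1
    have hh₀m : Measurable h₀ := hHmeas j hjI h₀ hh₀
    have hjm : Measurable j := hImeas j hjI
    set B : G → Set Ω := fun p => {ω | (p : (Ω → ℕ) × (Ω → E)).1 ω = j ω} with hBdef
    have hpI : ∀ p : G, (p : (Ω → ℕ) × (Ω → E)).1 ∈ I := fun p => (hG.1 p p.2).1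
    have hpH : ∀ p : G, (p : (Ω → ℕ) × (Ω → E)).2 ∈ H (p : (Ω → ℕ) × (Ω → E)).1 :=
      fun p => (hG.1 p p.2).2
    have hBm : ∀ p : G, MeasurableSet (B p) := by
      intro p
      have h1 : Measurable (p : (Ω → ℕ) × (Ω → E)).1 := hImeas _ (hpI p)
      have : B p = ⋃ n : ℕ, (p : (Ω → ℕ) × (Ω → E)).1 ⁻¹' {n} ∩ j ⁻¹' {n} := by
        ext ω
        simp only [hBdef, mem_setOf_eq, mem_iUnion, mem_inter_iff, mem_preimage,
          mem_singleton_iff]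
        exact ⟨fun h => ⟨j ω, h, rfl⟩, fun ⟨n, h1, h2⟩ => h1.trans h2.symm⟩
      rw [this]
      exact MeasurableSet.iUnion fun n =>
        (h1 (measurableSet_singleton n)).inter (hjm (measurableSet_singleton n))
    obtain ⟨g, hg⟩ := exists_opt_cover μ B hBm
    -- pieces
    set D : ℕ → Set Ω := fun m => Option.elim (g m) ∅ B with hDdef
    have hDm : ∀ m, MeasurableSet (D m) := by
      intro m
      have hDm' : D m = Option.elim (g m) ∅ B := by rw [hDdef]
      rcases hc : g m with _ | p <;> rw [hDm', hc]
      · exact MeasurableSet.empty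
      · exact hBm p
    set q : ℕ → Ω → Prop := fun k ω =>
      Nat.rec (ω ∉ ⋃ m, D m) (fun m _ => ω ∈ D m) k with hqdef
    have htot : ∀ ω, ∃ k, q k ω := by
      intro ω
      by_cases h : ω ∈ ⋃ m, D m
      · obtain ⟨m, hm⟩ := mem_iUnion.mp h
        exact ⟨m + 1, hm⟩
      · exact ⟨0, h⟩
    have hqm : ∀ k, MeasurableSet {ω | q k ω} := by
      intro k
      cases k with
      | zero => exact (MeasurableSet.iUnion hDm).compl
      | succ m => exact hDm m
    -- the sequences of indices and values
    set iseq : ℕ → Ω → ℕ := fun k =>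
      Nat.rec j (fun m _ => Option.elim (g m) j
        (fun p => (p : (Ω → ℕ) × (Ω → E)).1)) k with hiseqdef
    set z : ℕ → Ω → E := fun k =>
      Nat.rec h₀ (fun m _ => Option.elim (g m) h₀
        (fun p => (p : (Ω → ℕ) × (Ω → E)).2)) k with hzdef
    have hiseqI : ∀ k, iseq k ∈ I := by
      intro k
      cases k with
      | zero => exact hjI
      | succ m =>
        show Option.elim (g m) j _ ∈ I
        cases g m with
        | none => exact hjI
        | some p => exact hpI p
    have hzH : ∀ k, z k ∈ H (iseq k) := by
      intro k
      cases k with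
      | zero => exact hh₀
      | succ m =>
        show Option.elim (g m) h₀ _ ∈ H (Option.elim (g m) j _)
        cases g m with
        | none => exact hh₀
        | some p => exact hpH p
    have hzm : ∀ k, Measurable (z k) := fun k => hHmeas _ (hiseqI k) _ (hzH k)
    -- the value on the m-th piece coincides with j there
    have hDiseq : ∀ m ω, ω ∈ D m → iseq (m + 1) ω = j ω := by
      intro m ω hω
      revert hω
      show ω ∈ Option.elim (g m) ∅ B → Option.elim (g m) j _ ω = j ω
      cases g m with
      | none => intro h; exact absurd h (notMem_empty ω)
      | some p => intro h; exact h
    -- the candidate function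
    set f : Ω → E := fun ω => z (Nat.find (htot ω)) ω with hfdef
    have hfm : Measurable f := Measurable.find hzm hqm htot
    -- the partition given by the first piece containing ω
    have hidxm : Measurable fun ω => Nat.find (htot ω) :=
      measurable_find htot hqm
    set A : ℕ → Set Ω := fun k => {ω | Nat.find (htot ω) = k} with hAdef
    have hA : IsPartitionAE μ A := by
      refine ⟨fun k => hidxm (measurableSet_singleton k), fun a b hab => ?_, ?_⟩
      · have : A a ∩ A b = ∅ := by
          ext ω
          simp only [hAdef, mem_inter_iff, mem_setOf_eq, mem_empty_iff_false, iff_false,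
            not_and]
          intro h1 h2
          exact hab (h1 ▸ h2 ▸ rfl)
        rw [this, measure_empty]
      · have huniv : ⋃ k, A k = univ := by
          ext ω
          simp only [mem_iUnion, mem_univ, iff_true]
          exact ⟨Nat.find (htot ω), rfl⟩
        rw [huniv, compl_univ, measure_empty]
    -- j is the concatenation of iseq along A
    have hjconcat : IsConcatAE μ A iseq j := by
      intro k
      refine Eventually.of_forall fun ω hω => ?_
      cases k with
      | zero => rfl
      | succ m =>
        have hfind : Nat.find (htot ω) = m + 1 := hω
        have : q (m + 1) ω := hfind ▸ Nat.find_spec (htot ω)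
        exact (hDiseq m ω this).symm
    -- f is the concatenation of z along A
    have hfconcat : IsConcatAE μ A z f := by
      intro k
      refine Eventually.of_forall fun ω hω => ?_
      have hfind : Nat.find (htot ω) = k := hω
      show z (Nat.find (htot ω)) ω = z k ω
      rw [hfind]
    -- hence f ∈ H j
    have hfHj : f ∈ H j := by
      rw [hHfam A hA iseq hiseqI j hjm hjconcat]
      exact ⟨hfm, z, hzH, hfconcat⟩
    -- locality of f with respect to every member of G
    have hloc : ∀ p ∈ G, ∀ᵐ ω ∂μ, p.1 ω = j ω → p.2 ω = f ω := by
      intro p hp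
      have h0 : μ (B ⟨p, hp⟩ \ ⋃ m, D m) = 0 := hg ⟨p, hp⟩
      have h0' : ∀ᵐ ω ∂μ, ω ∉ B ⟨p, hp⟩ \ ⋃ m, D m :=
        measure_eq_zero_iff_ae_notMem.mp h0
      have hm : ∀ m : ℕ, ∀ᵐ ω ∂μ, ω ∈ D m → p.1 ω = j ω → p.2 ω = z (m + 1) ω := by
        intro m
        have : ∀ᵐ ω ∂μ, ω ∈ Option.elim (g m) ∅ B →
            p.1 ω = j ω → p.2 ω = Option.elim (g m) h₀
              (fun r => (r : (Ω → ℕ) × (Ω → E)).2) ω := by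
          cases g m with
          | none => exact Eventually.of_forall fun ω h => absurd h (notMem_empty ω)
          | some r =>
            filter_upwards [hG.2 p hp r r.2] with ω hω hB hpj
            exact hω (hpj.trans hB.symm)
        exact this
      rw [← ae_all_iff] at hm
      filter_upwards [h0', hm] with ω hω1 hω2 hpj
      have hωB : ω ∈ B ⟨p, hp⟩ := hpj
      have hωU : ω ∈ ⋃ m, D m := by
        by_contra h
        exact hω1 ⟨hωB, h⟩
      have hq0 : ¬ q 0 ω := fun h => h hωU
      have hspec : q (Nat.find (htot ω)) ω := Nat.find_spec (htot ω)
      obtain ⟨m, hfind⟩ : ∃ m, Nat.find (htot ω) = m + 1 := by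
        cases hk : Nat.find (htot ω) with
        | zero => exact absurd (hk ▸ hspec) hq0
        | succ m => exact ⟨m, rfl⟩
      have hq' : q (m + 1) ω := by rw [← hfind]; exact hspec
      have hωD : ω ∈ D m := hq'
      have : f ω = z (m + 1) ω := by
        show z (Nat.find (htot ω)) ω = z (m + 1) ω
        rw [hfind]
      rw [this]
      exact hω2 m hωD hpj
    -- extend the maximal graph: contradiction
    have hins : insert (j, f) G ∈ P := by
      constructor
      · rintro p (rfl | hp)
        · exact ⟨hjI, hfHj⟩
        · exact hG.1 p hp
      · rintro p (rfl | hp) r (rfl | hr)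
        · exact Eventually.of_forall fun ω _ => rfl
        · filter_upwards [hloc r hr] with ω hω hjr
          exact (hω hjr.symm).symm
        · filter_upwards [hloc p hp] with ω hω hpj
          exact hω hpj
        · exact hG.2 p hp r hr
    have hsub : insert (j, f) G ⊆ G := hGmax.2 hins (subset_insert _ _)
    exact hjG f (hsub (mem_insert _ _))
  -- the choice function
  set x : (Ω → ℕ) → Ω → E := fun i =>
    if h : ∃ f, (i, f) ∈ G then Classical.choose h else f₀ with hxdef
  have hxG : ∀ i ∈ I, (i, x i) ∈ G := by
    intro i hi
    have h := hGdom i hi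
    rw [hxdef]
    simp only [dif_pos h]
    exact Classical.choose_spec h
  refine ⟨x, fun i hi => (hG.1 _ (hxG i hi)).2, ?_⟩
  intro A hA iseq hiseqI j hjI hjm hconcat k
  filter_upwards [hG.2 (j, x j) (hxG j hjI) (iseq k, x (iseq k)) (hxG (iseq k) (hiseqI k)),
    hconcat k] with ω hω1 hω2 hωA
  exact hω1 (hω2 hωA)


end RandomSetPaper
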